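/- arXiv:0812.3684 — 3 statements merged into one kernel-verified Lean document; each statement's English description precedes it below -/
import Mathlib

section
/- With \(\chi\) as above, for \(n \ge 1\) and any root \(\alpha\) of \(\mathfrak{g}\), \(\chi(n\delta + \alpha) \ge 0\); and for \(n = -1\), \(\chi(-\delta + \alpha) \ge 0\) if and only if \(\chi(\delta - \theta) = 0\) and \(\chi(\alpha) = \chi(\theta)\). -/
/-- With `χ` a `ℤ`-linear function on the affine root lattice taking values in
`{0,1}` on the affine simple roots `δ - θ, α₁, …, α_r`: for `n ≥ 1` and any root `α` of `𝔤`,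
`χ(n δ + α) ≥ 0`; and for `n = -1`, `χ(-δ + α) ≥ 0` iff `χ(δ - θ) = 0` and `χ(α) = χ(θ)`. -/
theorem stmt7 {V : Type*} [AddCommGroup V] {r : ℕ}
    (Δ : Fin r → V) (Φ : Set V) (θ δ : V)
    (χ : V →+ ℤ)
    (hχ0 : χ (δ - θ) = 0 ∨ χ (δ - θ) = 1)
    (hχ : ∀ i, χ (Δ i) = 0 ∨ χ (Δ i) = 1)
    -- `θ` is the highest root: `θ ± α` are nonnegative combinations of simple roots
    (hsub : ∀ α ∈ Φ, ∃ c : Fin r → ℕ, θ - α = ∑ i, c i • Δ i)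
    (hadd : ∀ α ∈ Φ, ∃ c : Fin r → ℕ, θ + α = ∑ i, c i • Δ i) :
    (∀ (n : ℤ), 1 ≤ n → ∀ α ∈ Φ, 0 ≤ χ (n • δ + α)) ∧
    (∀ α ∈ Φ, (0 ≤ χ ((-1 : ℤ) • δ + α) ↔ χ (δ - θ) = 0 ∧ χ α = χ θ)) := by
  have hcomb : ∀ c : Fin r → ℕ, 0 ≤ χ (∑ i, c i • Δ i) := by
    intro c
    rw [map_sum]
    apply Finset.sum_nonneg
    intro i _
    rw [map_nsmul]
    rcases hχ i with h | h <;> simp [h]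
  have hδθ : 0 ≤ χ (δ - θ) := by rcases hχ0 with h | h <;> simp [h]
  have hplus : ∀ α ∈ Φ, 0 ≤ χ θ + χ α := by
    intro α hα
    obtain ⟨c, hc⟩ := hadd α hα
    have := hcomb c
    rw [← hc, map_add] at this
    exact this
  have hminus : ∀ α ∈ Φ, 0 ≤ χ θ - χ α := by
    intro α hα
    obtain ⟨c, hc⟩ := hsub α hα
    have := hcomb c
    rw [← hc, map_sub] at this
    exact this
  have hδθ' : χ (δ - θ) = χ δ - χ θ := map_sub χ δ θ
  constructor
  · intro n hn α hα
    have h1 := hplus α hα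
    have h2 := hminus α hα
    have hδ : 0 ≤ χ δ := by omega
    rw [map_add, map_zsmul, smul_eq_mul]
    have : χ δ ≤ n * χ δ := le_mul_of_one_le_left hδ hn
    have hkey : 0 ≤ χ δ + χ α := by omega
    omega
  · intro α hα
    have h2 := hminus α hα
    rw [map_add, map_zsmul, smul_eq_mul]
    have hδeq : χ δ = χ (δ - θ) + χ θ := by rw [map_sub]; ring
    constructor
    · intro h
      constructor <;> omega
    · intro ⟨h1, h2⟩
      omega
end

section
/- In the infinite-matrix model of \(L\mathfrak{gl}(n,\mathbb{C})\) (doubly-infinite matrices with \(M_{k,l}=M_{k+n,l+n}\)), the index-shift map \(\sigma(M)_{k,l} = M_{k+1,l+1}\) is a Lie algebra automorphism whose \(n\)-th power is induced by conjugation by \(z\) times a permutation, i.e. \(\sigma^n\) acts on loops as an inner automorphism; in particular \(\sigma\) generates a cyclic group of outer automorphisms of order dividing \(n\) on the quotient by inner automorphisms. -/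
/-- Product of doubly-infinite matrices (with finitely many nonzero diagonals the sum
is finite). -/
noncomputable def imul (A B : ℤ → ℤ → ℂ) : ℤ → ℤ → ℂ :=
  fun k l => ∑ᶠ m : ℤ, A k m * B m l

/-- Bracket of doubly-infinite matrices. -/
noncomputable def ibrack (A B : ℤ → ℤ → ℂ) : ℤ → ℤ → ℂ :=
  fun k l => imul A B k l - imul B A k l

/-- The index-shift map `σ(A)_{k,l} = A_{k+1,l+1}` on doubly-infinite matrices. -/
def shiftMat (A : ℤ → ℤ → ℂ) : ℤ → ℤ → ℂ := fun k l => A (k + 1) (l + 1)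

/-- The infinite-matrix model of `L𝔤𝔩(n,ℂ)`: doubly-infinite matrices with finitely many
nonzero diagonals, invariant under the shift `(k,l) ↦ (k+n, l+n)`. -/
def loopMatrixModel (n : ℕ) : Set (ℤ → ℤ → ℂ) :=
  {A | (∀ k l : ℤ, A (k + n) (l + n) = A k l) ∧
    {d : ℤ | ∃ k l : ℤ, k - l = d ∧ A k l ≠ 0}.Finite}

/-- In the infinite-matrix model of `L𝔤𝔩(n,ℂ)`, the index-shift map
`σ(A)_{k,l} = A_{k+1,l+1}` is a Lie algebra automorphism of the model, and its `n`-th power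
acts on loops as an inner automorphism — indeed `σⁿ` is the identity on the model (it is
induced by conjugation by `z` times a permutation matrix, which is central as an operation);
in particular `σ` generates a cyclic group of outer automorphisms of order dividing `n`. -/
theorem stmt16 (n : ℕ) (hn : 0 < n) :
    (∀ A ∈ loopMatrixModel n, shiftMat A ∈ loopMatrixModel n) ∧
    (∀ A B : ℤ → ℤ → ℂ, shiftMat (ibrack A B) = ibrack (shiftMat A) (shiftMat B)) ∧
    (∀ A ∈ loopMatrixModel n, shiftMat^[n] A = A) := by
  refine ⟨?_, ?_, ?_⟩
  · rintro A ⟨h1, h2⟩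
    refine ⟨fun k l => ?_, h2.subset ?_⟩
    · show A (k + n + 1) (l + n + 1) = A (k + 1) (l + 1)
      have := h1 (k + 1) (l + 1)
      convert this using 2 <;> ring
    · rintro d ⟨k, l, hkl, hA⟩
      exact ⟨k + 1, l + 1, by omega, hA⟩
  · intro A B
    funext k l
    have key : ∀ C D : ℤ → ℤ → ℂ,
        imul C D (k + 1) (l + 1) = imul (shiftMat C) (shiftMat D) k l := by
      intro C D
      show (∑ᶠ m : ℤ, C (k+1) m * D m (l+1)) = ∑ᶠ m : ℤ, C (k+1) (m+1) * D (m+1) (l+1)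
      exact (finsum_comp (fun m : ℤ => m + 1) (Equiv.addRight (1:ℤ)).bijective).symm
    show imul A B (k+1) (l+1) - imul B A (k+1) (l+1) = _
    rw [key A B, key B A]; rfl
  · rintro A ⟨h1, -⟩
    have iter : ∀ (m : ℕ) (B : ℤ → ℤ → ℂ) (k l : ℤ),
        shiftMat^[m] B k l = B (k + m) (l + m) := by
      intro m
      induction m with
      | zero => simp
      | succ m ih =>
        intro B k l
        rw [Function.iterate_succ_apply, ih]
        show B (k + m + 1) (l + m + 1) = B (k + (m+1 : ℕ)) (l + (m+1 : ℕ))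
        push_cast; ring_nf
    funext k l
    rw [iter n A k l, h1]
end

section
/- In the ADHM description of rank \(n\), charge \(k\) instanton bundles with \(A\) invertible: given matrices \((A,B,C,D)\) with \(A,B \in M_k(\mathbb{C})\), \(C \in M_{k\times n}(\mathbb{C})\) with columns \(C_1,\dots,C_n\), \(D \in M_{n\times k}(\mathbb{C})\) with rows \(D_1,\dots,D_n\), satisfying \([A,B] + CD = 0\) and \(A\) invertible, the transform \(\mathcal{H}(A,B,C,D) = (A,\ B - C_1 D_1 A^{-1},\ (C_2,\dots,C_n, AC_1),\ (D_2,\dots,D_n, D_1 A^{-1}))\) again satisfies the ADHM constraint, and \(\mathcal{H}^n(A,B,C,D) = (A, ABA^{-1}, AC, DA^{-1})\), which is the \(GL(k)\)-gauge transform of \((A,B,C,D)\) by \(g = A\). -/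
open Matrix

/-- The ADHM data for framed rank-`n` holomorphic bundles on `ℙ¹ × ℙ¹` with `c₂ = k`:
a four-tuple `(A, B, C, D)` of matrices. -/
abbrev ADHMData (k n : ℕ) :=
  Matrix (Fin k) (Fin k) ℂ × Matrix (Fin k) (Fin k) ℂ ×
    Matrix (Fin k) (Fin n) ℂ × Matrix (Fin n) (Fin k) ℂ

/-- The Hecke transform on ADHM data (for `A` invertible):
`ℋ(A,B,C,D) = (A, B - C₁D₁A⁻¹, (C₂,…,C_n, AC₁), (D₂,…,D_n, D₁A⁻¹))`, where `Cᵢ` are the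
columns of `C` and `Dᵢ` the rows of `D`. -/
noncomputable def heckeADHM (k n : ℕ) [NeZero n] (X : ADHMData k n) : ADHMData k n :=
  let A := X.1
  let B := X.2.1
  let C := X.2.2.1
  let D := X.2.2.2
  let c1 : Fin k → ℂ := fun r => C r 0          -- first column of `C`
  let d1 : Fin k → ℂ := fun r => D 0 r          -- first row of `D`
  (A,
   B - Matrix.vecMulVec c1 d1 * A⁻¹,
   Matrix.of fun r s => if h : (s : ℕ) + 1 < n then C r ⟨(s : ℕ) + 1, h⟩ else A.mulVec c1 r,
   Matrix.of fun s r => if h : (s : ℕ) + 1 < n then D ⟨(s : ℕ) + 1, h⟩ r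
     else Matrix.vecMul d1 A⁻¹ r)

section Aux

set_option linter.unusedSectionVars false

variable {k n : ℕ} [NeZero n]

private lemma aux_mod_lt (a : ℕ) : a % n < n := Nat.mod_lt _ (NeZero.pos n)

/-- State of `C` after `m` Hecke transforms. -/
noncomputable def stC (A : Matrix (Fin k) (Fin k) ℂ) (C : Matrix (Fin k) (Fin n) ℂ)
    (m : ℕ) : Matrix (Fin k) (Fin n) ℂ :=
  Matrix.of fun r s =>
    if (s : ℕ) + m < n then C r ⟨((s : ℕ) + m) % n, aux_mod_lt _⟩
    else A.mulVec (fun r' => C r' ⟨((s : ℕ) + m) % n, aux_mod_lt _⟩) r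

/-- State of `D` after `m` Hecke transforms. -/
noncomputable def stD (A : Matrix (Fin k) (Fin k) ℂ) (D : Matrix (Fin n) (Fin k) ℂ)
    (m : ℕ) : Matrix (Fin n) (Fin k) ℂ :=
  Matrix.of fun s r =>
    if (s : ℕ) + m < n then D ⟨((s : ℕ) + m) % n, aux_mod_lt _⟩ r
    else Matrix.vecMul (fun r' => D ⟨((s : ℕ) + m) % n, aux_mod_lt _⟩ r') A⁻¹ r

/-- State of `B` after `m` Hecke transforms. -/
noncomputable def stB (A B : Matrix (Fin k) (Fin k) ℂ) (C : Matrix (Fin k) (Fin n) ℂ)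
    (D : Matrix (Fin n) (Fin k) ℂ) (m : ℕ) : Matrix (Fin k) (Fin k) ℂ :=
  B - (∑ i : Fin n, if (i : ℕ) < m then
        vecMulVec (fun r => C r i) (fun r => D i r) else 0) * A⁻¹

lemma stC_zero (A : Matrix (Fin k) (Fin k) ℂ) (C : Matrix (Fin k) (Fin n) ℂ) :
    stC A C 0 = C := by
  ext r s
  have h2 : ((s : ℕ) + 0) % n = (s : ℕ) := by
    rw [Nat.add_zero]; exact Nat.mod_eq_of_lt s.isLt
  simp only [stC, Matrix.of_apply, h2]
  rw [if_pos (by omega : (s : ℕ) + 0 < n)]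

lemma stD_zero (A : Matrix (Fin k) (Fin k) ℂ) (D : Matrix (Fin n) (Fin k) ℂ) :
    stD A D 0 = D := by
  ext s r
  have h2 : ((s : ℕ) + 0) % n = (s : ℕ) := by
    rw [Nat.add_zero]; exact Nat.mod_eq_of_lt s.isLt
  simp only [stD, Matrix.of_apply, h2]
  rw [if_pos (by omega : (s : ℕ) + 0 < n)]

lemma stB_zero (A B : Matrix (Fin k) (Fin k) ℂ) (C : Matrix (Fin k) (Fin n) ℂ)
    (D : Matrix (Fin n) (Fin k) ℂ) : stB A B C D 0 = B := by
  simp [stB]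

lemma stC_n (A : Matrix (Fin k) (Fin k) ℂ) (C : Matrix (Fin k) (Fin n) ℂ) :
    stC A C n = A * C := by
  ext r s
  have h1 : ¬ ((s : ℕ) + n < n) := by omega
  have h2 : ((s : ℕ) + n) % n = (s : ℕ) := by
    rw [Nat.add_mod_right]; exact Nat.mod_eq_of_lt s.isLt
  simp only [stC, Matrix.of_apply, if_neg h1, h2, Matrix.mul_apply, Matrix.mulVec, dotProduct]

lemma stD_n (A : Matrix (Fin k) (Fin k) ℂ) (D : Matrix (Fin n) (Fin k) ℂ) :
    stD A D n = D * A⁻¹ := by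
  ext s r
  have h1 : ¬ ((s : ℕ) + n < n) := by omega
  have h2 : ((s : ℕ) + n) % n = (s : ℕ) := by
    rw [Nat.add_mod_right]; exact Nat.mod_eq_of_lt s.isLt
  simp only [stD, Matrix.of_apply, if_neg h1, h2, Matrix.mul_apply, Matrix.vecMul, dotProduct]

lemma sum_vecMulVec (C : Matrix (Fin k) (Fin n) ℂ) (D : Matrix (Fin n) (Fin k) ℂ) :
    (∑ i : Fin n, vecMulVec (fun r => C r i) (fun r => D i r)) = C * D := by
  ext r r'
  rw [Matrix.mul_apply]
  simp only [Matrix.sum_apply, vecMulVec_apply]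

lemma stB_n (A B : Matrix (Fin k) (Fin k) ℂ) (C : Matrix (Fin k) (Fin n) ℂ)
    (D : Matrix (Fin n) (Fin k) ℂ) : stB A B C D n = B - (C * D) * A⁻¹ := by
  rw [stB, ← sum_vecMulVec C D]
  congr 2
  apply Finset.sum_congr rfl
  intro i _
  rw [if_pos i.isLt]

/-- One Hecke step advances the state. -/
lemma hecke_step (A B : Matrix (Fin k) (Fin k) ℂ) (C : Matrix (Fin k) (Fin n) ℂ)
    (D : Matrix (Fin n) (Fin k) ℂ) (m : ℕ) (hm : m < n) :
    heckeADHM k n (A, stB A B C D m, stC A C m, stD A D m) =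
      (A, stB A B C D (m + 1), stC A C (m + 1), stD A D (m + 1)) := by
  have hz : ((0 : Fin n) : ℕ) = 0 := by simp
  have hmn : m % n = m := Nat.mod_eq_of_lt hm
  have hv : ((⟨m, hm⟩ : Fin n) : ℕ) = m := rfl
  have hc1 : (fun r => stC A C m r 0) = (fun r => C r ⟨m, hm⟩) := by
    funext r
    simp only [stC, Matrix.of_apply, hz, Nat.zero_add, hmn]
    rw [if_pos hm]
  have hd1 : (fun r => stD A D m 0 r) = (fun r => D ⟨m, hm⟩ r) := by
    funext r
    simp only [stD, Matrix.of_apply, hz, Nat.zero_add, hmn]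
    rw [if_pos hm]
  unfold heckeADHM
  dsimp only
  simp only [Prod.mk.injEq]
  refine ⟨trivial, ?_, ?_, ?_⟩
  · -- B component
    rw [hc1, hd1]
    simp only [stB]
    have hsum : (∑ i : Fin n, if (i : ℕ) < m + 1 then
          vecMulVec (fun r => C r i) (fun r => D i r) else 0) =
        (∑ i : Fin n, if (i : ℕ) < m then
          vecMulVec (fun r => C r i) (fun r => D i r) else 0) +
        vecMulVec (fun r => C r ⟨m, hm⟩) (fun r => D ⟨m, hm⟩ r) := by
      rw [← Fintype.sum_ite_eq' (⟨m, hm⟩ : Fin n)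
        (fun i => vecMulVec (fun r => C r i) (fun r => D i r)), ← Finset.sum_add_distrib]
      apply Finset.sum_congr rfl
      intro i _
      rcases lt_trichotomy (i : ℕ) m with h1 | h1 | h1
      · have h3 : i ≠ ⟨m, hm⟩ := by
          intro h; rw [h, hv] at h1; exact lt_irrefl m h1
        rw [if_pos h1, if_pos (by omega : (i : ℕ) < m + 1), if_neg h3, add_zero]
      · have h4 : i = ⟨m, hm⟩ := Fin.ext (by rw [hv]; exact h1)
        rw [if_pos (by omega : (i : ℕ) < m + 1), if_neg (by omega : ¬ ((i : ℕ) < m)),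
          if_pos h4, zero_add, h4]
      · have h3 : i ≠ ⟨m, hm⟩ := by
          intro h; rw [h, hv] at h1; exact lt_irrefl m h1
        rw [if_neg (by omega : ¬ ((i : ℕ) < m)), if_neg (by omega : ¬ ((i : ℕ) < m + 1)),
          if_neg h3, add_zero]
    rw [hsum]
    noncomm_ring
  · -- C component
    ext r s
    simp only [Matrix.of_apply]
    by_cases h1 : (s : ℕ) + 1 < n
    · rw [dif_pos h1]
      simp only [stC, Matrix.of_apply, Fin.val_mk,
        show (s : ℕ) + 1 + m = (s : ℕ) + (m + 1) from by omega]
    · rw [dif_neg h1, hc1]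
      have h2 : ¬ ((s : ℕ) + (m + 1) < n) := by omega
      have key : ((s : ℕ) + (m + 1)) % n = m := by
        rw [show (s : ℕ) + (m + 1) = n + m from by omega, Nat.add_mod_left]; exact hmn
      simp only [stC, Matrix.of_apply, if_neg h2, key]
  · -- D component
    ext s r
    simp only [Matrix.of_apply]
    by_cases h1 : (s : ℕ) + 1 < n
    · rw [dif_pos h1]
      simp only [stD, Matrix.of_apply, Fin.val_mk,
        show (s : ℕ) + 1 + m = (s : ℕ) + (m + 1) from by omega]
    · rw [dif_neg h1, hd1]
      have h2 : ¬ ((s : ℕ) + (m + 1) < n) := by omega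
      have key : ((s : ℕ) + (m + 1)) % n = m := by
        rw [show (s : ℕ) + (m + 1) = n + m from by omega, Nat.add_mod_left]; exact hmn
      simp only [stD, Matrix.of_apply, if_neg h2, key]

lemma hecke_iterate (A B : Matrix (Fin k) (Fin k) ℂ) (C : Matrix (Fin k) (Fin n) ℂ)
    (D : Matrix (Fin n) (Fin k) ℂ) :
    ∀ m, m ≤ n → (heckeADHM k n)^[m] (A, B, C, D) =
      (A, stB A B C D m, stC A C m, stD A D m) := by
  intro m
  induction m with
  | zero => intro _; simp [stB_zero, stC_zero, stD_zero]
  | succ m ih =>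
    intro hm
    rw [Function.iterate_succ_apply', ih (by omega), hecke_step A B C D m (by omega)]

lemma mul_vecMulVec_mul (A : Matrix (Fin k) (Fin k) ℂ) (c d : Fin k → ℂ)
    (A' : Matrix (Fin k) (Fin k) ℂ) :
    vecMulVec (A.mulVec c) (vecMul d A') = A * vecMulVec c d * A' := by
  ext r r'
  simp only [Matrix.mul_apply, vecMulVec_apply, Matrix.mulVec, Matrix.vecMul, dotProduct]
  rw [Finset.sum_mul_sum]
  rw [Finset.sum_comm]
  apply Finset.sum_congr rfl
  intro x _
  rw [Finset.sum_mul]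
  apply Finset.sum_congr rfl
  intro y _
  ring

end Aux

/-- In the ADHM description of rank-`n`, charge-`k` instanton bundles with
`A` invertible: if `(A,B,C,D)` satisfies the ADHM constraint `[A,B] + CD = 0` and `A` is
invertible, then the Hecke transform `ℋ(A,B,C,D)` again satisfies the ADHM constraint, and
`ℋⁿ(A,B,C,D) = (A, ABA⁻¹, AC, DA⁻¹)`, the `GL(k)`-gauge transform of `(A,B,C,D)` by
`g = A`. -/
theorem stmt19 (k n : ℕ) [NeZero n]
    (A B : Matrix (Fin k) (Fin k) ℂ) (C : Matrix (Fin k) (Fin n) ℂ)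
    (D : Matrix (Fin n) (Fin k) ℂ)
    (hADHM : A * B - B * A + C * D = 0)
    (hA : IsUnit A.det) :
    (let Y := heckeADHM k n (A, B, C, D)
     Y.1 * Y.2.1 - Y.2.1 * Y.1 + Y.2.2.1 * Y.2.2.2 = 0) ∧
    (heckeADHM k n)^[n] (A, B, C, D) = (A, A * B * A⁻¹, A * C, D * A⁻¹) := by
  have h1 : A⁻¹ * A = 1 := Matrix.nonsing_inv_mul A hA
  have h2 : A * A⁻¹ = 1 := Matrix.mul_nonsing_inv A hA
  constructor
  · -- constraint for one Hecke step
    intro Y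
    have hY1 : Y.1 = A := rfl
    have hY2 : Y.2.1 = B - vecMulVec (fun r => C r 0) (fun r => D 0 r) * A⁻¹ := rfl
    have hY3 : Y.2.2.1 = Matrix.of fun (r : Fin k) (s : Fin n) =>
        if h : (s : ℕ) + 1 < n then C r ⟨(s : ℕ) + 1, h⟩
        else A.mulVec (fun r => C r 0) r := rfl
    have hY4 : Y.2.2.2 = Matrix.of fun (s : Fin n) (r : Fin k) =>
        if h : (s : ℕ) + 1 < n then D ⟨(s : ℕ) + 1, h⟩ r
        else Matrix.vecMul (fun r => D 0 r) A⁻¹ r := rfl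
    have hprod : Y.2.2.1 * Y.2.2.2 =
        C * D - vecMulVec (fun r => C r 0) (fun r => D 0 r) +
          A * vecMulVec (fun r => C r 0) (fun r => D 0 r) * A⁻¹ := by
      rw [← mul_vecMulVec_mul]
      ext r r'
      obtain ⟨n', rfl⟩ : ∃ n', n = n' + 1 := ⟨n - 1, by have := NeZero.pos n; omega⟩
      rw [hY3, hY4]
      simp only [Matrix.mul_apply, Matrix.sub_apply, Matrix.add_apply, vecMulVec_apply,
        Matrix.of_apply]
      have hterm : ∀ s : Fin (n' + 1),
          ((if h : (s : ℕ) + 1 < n' + 1 then C r ⟨(s : ℕ) + 1, h⟩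
              else A.mulVec (fun r => C r 0) r) *
            (if h : (s : ℕ) + 1 < n' + 1 then D ⟨(s : ℕ) + 1, h⟩ r'
              else Matrix.vecMul (fun r => D 0 r) A⁻¹ r')) =
          if h : (s : ℕ) + 1 < n' + 1 then C r ⟨(s : ℕ) + 1, h⟩ * D ⟨(s : ℕ) + 1, h⟩ r'
          else (A.mulVec (fun r => C r 0) r) * (Matrix.vecMul (fun r => D 0 r) A⁻¹ r') := by
        intro s
        by_cases h : (s : ℕ) + 1 < n' + 1
        · rw [dif_pos h, dif_pos h, dif_pos h]
        · rw [dif_neg h, dif_neg h, dif_neg h]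
      rw [Finset.sum_congr rfl (fun s _ => hterm s)]
      rw [Fin.sum_univ_castSucc]
      have hlast : ¬ (((Fin.last n' : Fin (n' + 1)) : ℕ) + 1 < n' + 1) := by
        simp only [Fin.val_last]; omega
      rw [dif_neg hlast]
      have hcast : ∀ s : Fin n',
          (if h : ((Fin.castSucc s : Fin (n' + 1)) : ℕ) + 1 < n' + 1 then
            C r ⟨((Fin.castSucc s : Fin (n' + 1)) : ℕ) + 1, h⟩ *
              D ⟨((Fin.castSucc s : Fin (n' + 1)) : ℕ) + 1, h⟩ r'
          else (A.mulVec (fun r => C r 0) r) * (Matrix.vecMul (fun r => D 0 r) A⁻¹ r')) =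
          C r s.succ * D s.succ r' := by
        intro s
        have h : ((Fin.castSucc s : Fin (n' + 1)) : ℕ) + 1 < n' + 1 := by
          simp only [Fin.coe_castSucc]; omega
        rw [dif_pos h]
        have hx : (⟨((Fin.castSucc s : Fin (n' + 1)) : ℕ) + 1, h⟩ : Fin (n' + 1)) = s.succ :=
          Fin.ext (by simp [Fin.coe_castSucc, Fin.val_succ])
        rw [hx]
      rw [Finset.sum_congr rfl (fun s _ => hcast s)]
      rw [Fin.sum_univ_succ (fun i : Fin (n' + 1) => C r i * D i r')]
      ring
    rw [hY1, hY2, hprod]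
    calc A * (B - vecMulVec (fun r => C r 0) (fun r => D 0 r) * A⁻¹) -
          (B - vecMulVec (fun r => C r 0) (fun r => D 0 r) * A⁻¹) * A +
          (C * D - vecMulVec (fun r => C r 0) (fun r => D 0 r) +
            A * vecMulVec (fun r => C r 0) (fun r => D 0 r) * A⁻¹)
        = (A * B - B * A + C * D) +
            vecMulVec (fun r => C r 0) (fun r => D 0 r) * (A⁻¹ * A) -
            vecMulVec (fun r => C r 0) (fun r => D 0 r) := by noncomm_ring
      _ = 0 := by rw [h1, mul_one, hADHM, zero_add, sub_self]
  · rw [hecke_iterate A B C D n le_rfl, stB_n, stC_n, stD_n]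
    have hB : B - (C * D) * A⁻¹ = A * B * A⁻¹ := by
      calc B - (C * D) * A⁻¹
          = A * B * A⁻¹ - (A * B - B * A + C * D) * A⁻¹ - B * (A * A⁻¹) + B := by noncomm_ring
        _ = A * B * A⁻¹ := by rw [hADHM, h2, zero_mul, sub_zero, mul_one, sub_add_cancel]
    rw [hB]
end
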